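/- The function w ↦ √(‖w−p‖² + s²) + √(‖w−q‖² + t²) on ℝᵏ, for fixed p, q ∈ ℝᵏ and s, t > 0, attains its minimum value √(‖p−q‖² + (s+t)²). -/

import Mathlib

lemma mink_aux (a b s t : ℝ) :
    Real.sqrt ((a + b) ^ 2 + (s + t) ^ 2) ≤
      Real.sqrt (a ^ 2 + s ^ 2) + Real.sqrt (b ^ 2 + t ^ 2) := by
  have h : ∀ x y : ℝ, Real.sqrt (x ^ 2 + y ^ 2) = ‖(⟨x, y⟩ : ℂ)‖ := by
    intro x y
    rw [Complex.norm_def, Complex.normSq_mk]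
    ring_nf
  rw [h, h, h]
  have hadd : (⟨a + b, s + t⟩ : ℂ) = ⟨a, s⟩ + ⟨b, t⟩ := by
    apply Complex.ext <;> simp
  rw [hadd]
  exact norm_add_le _ _

theorem stmt_9 {k : ℕ} (p q : EuclideanSpace ℝ (Fin k)) (s t : ℝ)
    (hs : 0 < s) (ht : 0 < t) :
    IsLeast (Set.range fun w : EuclideanSpace ℝ (Fin k) =>
        Real.sqrt (‖w - p‖ ^ 2 + s ^ 2) + Real.sqrt (‖w - q‖ ^ 2 + t ^ 2))
      (Real.sqrt (‖p - q‖ ^ 2 + (s + t) ^ 2)) := by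
  have hst : (0:ℝ) < s + t := by linarith
  obtain ⟨c, hc_def⟩ : ∃ c : ℝ, c = s / (s + t) := ⟨_, rfl⟩
  obtain ⟨e, he_def⟩ : ∃ e : ℝ, e = t / (s + t) := ⟨_, rfl⟩
  have hc : 0 ≤ c := by rw [hc_def]; positivity
  have he : 0 ≤ e := by rw [he_def]; positivity
  have hce : c + e = 1 := by rw [hc_def, he_def]; field_simp
  constructor
  · refine ⟨p + c • (q - p), ?_⟩
    have h1 : (p + c • (q - p)) - p = c • (q - p) := add_sub_cancel_left p _
    have h2 : (p + c • (q - p)) - q = -(e • (q - p)) := by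
      have : c = 1 - e := by linarith
      rw [this]; module
    have hd : ‖p - q‖ = ‖q - p‖ := norm_sub_rev p q
    set d : ℝ := ‖q - p‖ with hD
    have hd0 : 0 ≤ d := norm_nonneg _
    simp only [h1, h2, norm_neg, norm_smul, Real.norm_eq_abs, abs_of_nonneg hc,
      abs_of_nonneg he, hd]
    have hs' : s = c * (s + t) := by rw [hc_def]; field_simp
    have ht' : t = e * (s + t) := by rw [he_def]; field_simp
    have e1 : (c * d) ^ 2 + s ^ 2 = c ^ 2 * (d ^ 2 + (s + t) ^ 2) := by
      linear_combination (s + c * (s + t)) * hs'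
    have e2 : (e * d) ^ 2 + t ^ 2 = e ^ 2 * (d ^ 2 + (s + t) ^ 2) := by
      linear_combination (t + e * (s + t)) * ht'
    rw [e1, e2, Real.sqrt_mul (sq_nonneg c), Real.sqrt_mul (sq_nonneg e),
      Real.sqrt_sq hc, Real.sqrt_sq he, ← add_mul, hce, one_mul]
  · rintro x ⟨w, rfl⟩
    simp only
    have htri : ‖p - q‖ ≤ ‖w - p‖ + ‖w - q‖ := by
      have hpq : p - q = -(w - p) + (w - q) := by abel
      calc ‖p - q‖ = ‖-(w - p) + (w - q)‖ := by rw [hpq]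
        _ ≤ ‖-(w - p)‖ + ‖w - q‖ := norm_add_le _ _
        _ = ‖w - p‖ + ‖w - q‖ := by rw [norm_neg]
    calc Real.sqrt (‖p - q‖ ^ 2 + (s + t) ^ 2)
        ≤ Real.sqrt ((‖w - p‖ + ‖w - q‖) ^ 2 + (s + t) ^ 2) := by
          apply Real.sqrt_le_sqrt
          have := pow_le_pow_left₀ (norm_nonneg (p - q)) htri 2
          linarith
      _ ≤ Real.sqrt (‖w - p‖ ^ 2 + s ^ 2) + Real.sqrt (‖w - q‖ ^ 2 + t ^ 2) :=
          mink_aux _ _ _ _
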